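/- Lemma (invariance of the simplex and its faces under the flow of W_k). If γ is a trajectory of W_k with γ(0) ∈ Δ_k, then γ(t) ∈ Δ_k for all t ∈ ℝ. Moreover, for each index i ∈ {0,…,k}, if γ_i(0) = 0 then γ_i(t) = 0 for all t ∈ ℝ; hence every face of Δ_k is invariant under the flow of W_k. -/

import Mathlib

open Finset

/-- The simplicial vector field `W_k` on `ℝ^{k+1}`, given componentwise by
`(W_k x)_m = x_m * (∑_{i<m} x_i − ∑_{i>m} x_i)`. -/
noncomputable def Wfield (k : ℕ) (x : Fin (k + 1) → ℝ) : Fin (k + 1) → ℝ :=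
  fun m => x m * ((∑ i ∈ univ.filter (fun i => i < m), x i)
                - (∑ i ∈ univ.filter (fun i => m < i), x i))

lemma ode_exp {u g : ℝ → ℝ} (hg : Continuous g)
    (hu : ∀ t, HasDerivAt u (u t * g t) t) (t : ℝ) :
    u t = u 0 * Real.exp (∫ s in (0:ℝ)..t, g s) := by
  set G : ℝ → ℝ := fun t => ∫ s in (0:ℝ)..t, g s with hGdef
  have hGd : ∀ t, HasDerivAt G (g t) t := fun t =>
    intervalIntegral.integral_hasDerivAt_right (hg.intervalIntegrable 0 t)
      (hg.stronglyMeasurable.stronglyMeasurableAtFilter) hg.continuousAt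
  have hv : ∀ s, HasDerivAt (fun t => u t * Real.exp (-(G t))) 0 s := by
    intro s
    have h1 : HasDerivAt (fun t => Real.exp (-(G t)))
        (Real.exp (-(G s)) * (-(g s))) s := by
      simpa using ((hGd s).neg).exp
    have : HasDerivAt (fun t => u t * Real.exp (-(G t)))
        (u s * g s * Real.exp (-(G s)) + u s * (Real.exp (-(G s)) * -(g s))) s :=
      (hu s).fun_mul h1
    convert this using 1
    ring
  have hconst : u t * Real.exp (-(G t)) = u 0 * Real.exp (-(G 0)) :=
    is_const_of_deriv_eq_zero (fun x => (hv x).differentiableAt)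
      (fun x => (hv x).deriv) t 0
  have hG0 : G 0 = 0 := by simp [hGdef]
  rw [hG0] at hconst
  simp only [neg_zero, Real.exp_zero, mul_one, Real.exp_neg] at hconst
  have hpos : (Real.exp (G t)) ≠ 0 := (Real.exp_pos _).ne'
  field_simp at hconst
  linarith [hconst]

lemma Wfield_sum (k : ℕ) (x : Fin (k + 1) → ℝ) : ∑ m, Wfield k x m = 0 := by
  unfold Wfield
  simp_rw [mul_sub, Finset.sum_sub_distrib, Finset.mul_sum]
  rw [sub_eq_zero]
  rw [Finset.sum_comm' (s := (univ : Finset (Fin (k+1))))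
      (t := fun m => univ.filter (fun i => i < m)) (t' := univ)
      (s' := fun i => univ.filter (fun m => i < m)) (by intro m i; simp)]
  apply Finset.sum_congr rfl
  intro i _
  apply Finset.sum_congr rfl
  intro m _
  ring

theorem Wfield_flow_invariance (k : ℕ) (γ : ℝ → Fin (k + 1) → ℝ)
    (hγ : ∀ t : ℝ, HasDerivAt γ (Wfield k (γ t)) t)
    (h0 : γ 0 ∈ stdSimplex ℝ (Fin (k + 1))) :
    (∀ t : ℝ, γ t ∈ stdSimplex ℝ (Fin (k + 1))) ∧
    (∀ i : Fin (k + 1), γ 0 i = 0 → ∀ t : ℝ, γ t i = 0) := by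
  have hcomp : ∀ (i : Fin (k+1)) t, HasDerivAt (fun s => γ s i) (Wfield k (γ t) i) t :=
    fun i t => (hasDerivAt_pi.1 (hγ t)) i
  have hcont : ∀ i : Fin (k+1), Continuous (fun s => γ s i) := fun i =>
    continuous_iff_continuousAt.2 fun t => (hcomp i t).continuousAt
  -- the factor g_i
  set g : Fin (k+1) → ℝ → ℝ := fun i t =>
    (∑ j ∈ univ.filter (fun j => j < i), γ t j)
    - (∑ j ∈ univ.filter (fun j => i < j), γ t j) with hgdef
  have hgcont : ∀ i, Continuous (g i) := by
    intro i
    apply Continuous.sub <;> exact continuous_finset_sum _ (fun j _ => hcont j)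
  have hform : ∀ i t, γ t i = γ 0 i * Real.exp (∫ s in (0:ℝ)..t, g i s) := by
    intro i t
    exact ode_exp (hgcont i) (fun s => hcomp i s) t
  -- sum is constant
  have hsum : ∀ t, ∑ i, γ t i = 1 := by
    have hS : ∀ t, HasDerivAt (fun s => ∑ i, γ s i) 0 t := by
      intro t
      have := HasDerivAt.fun_sum (fun i (_ : i ∈ (univ : Finset (Fin (k+1)))) => hcomp i t)
      simpa [Wfield_sum k (γ t)] using this
    intro t
    have := is_const_of_deriv_eq_zero (f := fun s => ∑ i, γ s i)
      (fun x => (hS x).differentiableAt) (fun x => (hS x).deriv) t 0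
    rw [this]
    exact h0.2
  refine ⟨fun t => ⟨fun i => ?_, hsum t⟩, fun i hi t => by rw [hform i t, hi, zero_mul]⟩
  rw [hform i t]
  exact mul_nonneg (h0.1 i) (Real.exp_pos _).le
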